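/- For k > 0 and a rank k symmetric Schwartz tensor field f on ℝⁿ, one has J_{ij}(J^{m,k}f) = J^{m,k−1}h_{ij}, where h_{ij} is the rank k−1 symmetric tensor field with components (h_{ij})_{i₁…i_{k−1}} = k(∂f_{i₁…i_{k−1}j}/∂x^i − ∂f_{i₁…i_{k−1}i}/∂x^j). -/

import Mathlib

/-- Partial derivative in the `i`-th `x`-direction for functions of `(x,ξ) ∈ ℝⁿ×ℝⁿ`. -/
noncomputable def pdx (n : ℕ) (i : Fin n) (ψ : (Fin n → ℝ) × (Fin n → ℝ) → ℝ) :
    (Fin n → ℝ) × (Fin n → ℝ) → ℝ :=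
  fun p => fderiv ℝ ψ p (Pi.single i 1, 0)

/-- Partial derivative in the `i`-th `ξ`-direction. -/
noncomputable def pdxi (n : ℕ) (i : Fin n) (ψ : (Fin n → ℝ) × (Fin n → ℝ) → ℝ) :
    (Fin n → ℝ) × (Fin n → ℝ) → ℝ :=
  fun p => fderiv ℝ ψ p (0, Pi.single i 1)

/-- The operator `⟨ξ,∂ₓ⟩ = Σ_p ξ^p ∂/∂x^p`. -/
noncomputable def Dx (n : ℕ) (ψ : (Fin n → ℝ) × (Fin n → ℝ) → ℝ) :
    (Fin n → ℝ) × (Fin n → ℝ) → ℝ :=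
  fun p => ∑ q : Fin n, p.2 q * pdx n q ψ p

/-- Mixed iterated derivative `∂^k/∂x^{j₁}…∂x^{j_q}∂ξ^{j_{q+1}}…∂ξ^{j_k}` along the
multi-index `I`: the first `q` slots are `x`-derivatives, the rest `ξ`-derivatives. -/
noncomputable def mixedD (n k : ℕ) (q : ℕ) (I : Fin k → Fin n)
    (ψ : (Fin n → ℝ) × (Fin n → ℝ) → ℝ) : (Fin n → ℝ) × (Fin n → ℝ) → ℝ :=
  (List.finRange k).foldr
    (fun (a : Fin k) acc => if (a : ℕ) < q then pdx n (I a) acc else pdxi n (I a) acc) ψ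

/-- Symmetrization (averaging over permutations) of a tensor-indexed family of functions. -/
noncomputable def symAvg (n k : ℕ)
    (T : (Fin k → Fin n) → (Fin n → ℝ) × (Fin n → ℝ) → ℝ) (I : Fin k → Fin n) :
    (Fin n → ℝ) × (Fin n → ℝ) → ℝ :=
  fun p => ((Nat.factorial k : ℝ))⁻¹ * ∑ π : Equiv.Perm (Fin k), T (I ∘ π) p

/-- The John operator `J_{ij} = ∂²/∂x^i∂ξ^j − ∂²/∂x^j∂ξ^i`. -/
noncomputable def john (n : ℕ) (i j : Fin n) (ψ : (Fin n → ℝ) × (Fin n → ℝ) → ℝ) :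
    (Fin n → ℝ) × (Fin n → ℝ) → ℝ :=
  fun p => pdx n i (pdxi n j ψ) p - pdx n j (pdxi n i ψ) p

/-- Iterated John operators `J_{i₁j₁}⋯J_{i_rj_r}`. -/
noncomputable def iterJohn (n r : ℕ) (I J : Fin r → Fin n)
    (ψ : (Fin n → ℝ) × (Fin n → ℝ) → ℝ) : (Fin n → ℝ) × (Fin n → ℝ) → ℝ :=
  (List.finRange r).foldr (fun a acc => john n (I a) (J a) acc) ψ

open MeasureTheory

/-- `(J^{m,k} f)(x,ξ) = ∫ t^m ⟨f(x+tξ), ξ^k⟩ dt` for a rank-`k` tensor field `f`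
given by its component functions. -/
noncomputable def JmomT (n m k : ℕ) (f : (Fin k → Fin n) → (Fin n → ℝ) → ℝ) :
    (Fin n → ℝ) × (Fin n → ℝ) → ℝ :=
  fun p => ∫ t : ℝ, t ^ m *
    ∑ I : Fin k → Fin n, f I (p.1 + t • p.2) * ∏ a : Fin k, p.2 (I a)


namespace Stmt7Aux
open MeasureTheory Metric


variable {n : ℕ}

/-- The line evaluation map `(x,ξ) ↦ x + t ξ` as a CLM. -/
noncomputable def lmap (n : ℕ) (t : ℝ) : ((Fin n → ℝ) × (Fin n → ℝ)) →L[ℝ] (Fin n → ℝ) :=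
  ContinuousLinearMap.fst ℝ _ _ + t • ContinuousLinearMap.snd ℝ (Fin n → ℝ) (Fin n → ℝ)

lemma lmap_apply (t : ℝ) (p : (Fin n → ℝ) × (Fin n → ℝ)) : lmap n t p = p.1 + t • p.2 := rfl

lemma lmap_norm_le (t : ℝ) : ‖lmap n t‖ ≤ 1 + |t| := by
  refine ContinuousLinearMap.opNorm_le_bound _ (by positivity) (fun p => ?_)
  rw [lmap_apply]
  calc ‖p.1 + t • p.2‖ ≤ ‖p.1‖ + ‖t • p.2‖ := norm_add_le _ _
    _ = ‖p.1‖ + |t| * ‖p.2‖ := by rw [norm_smul, Real.norm_eq_abs]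
    _ ≤ ‖p‖ + |t| * ‖p‖ := by gcongr; exact norm_fst_le p; exact norm_snd_le p
    _ = (1 + |t|) * ‖p‖ := by ring

/-- `A φ r (x,ξ) = ∫ t^r φ(x+tξ) dt`. -/
noncomputable def A (φ : SchwartzMap (Fin n → ℝ) ℝ) (r : ℕ)
    (p : (Fin n → ℝ) × (Fin n → ℝ)) : ℝ :=
  ∫ t : ℝ, t ^ r * φ (p.1 + t • p.2)

/-- Pointwise derivative (in `p`) of the integrand of `A`. -/
noncomputable def Fd (φ : SchwartzMap (Fin n → ℝ) ℝ) (r : ℕ)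
    (p : (Fin n → ℝ) × (Fin n → ℝ)) (t : ℝ) : ((Fin n → ℝ) × (Fin n → ℝ)) →L[ℝ] ℝ :=
  t ^ r • ((fderiv ℝ φ (p.1 + t • p.2)).comp (lmap n t))

lemma Fd_hasFDerivAt (φ : SchwartzMap (Fin n → ℝ) ℝ) (r : ℕ) (t : ℝ)
    (p : (Fin n → ℝ) × (Fin n → ℝ)) :
    HasFDerivAt (fun q : (Fin n → ℝ) × (Fin n → ℝ) => t ^ r * φ (q.1 + t • q.2))
      (Fd φ r p t) p := by
  have h1 : HasFDerivAt (fun q : (Fin n → ℝ) × (Fin n → ℝ) => φ (q.1 + t • q.2))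
      ((fderiv ℝ φ (p.1 + t • p.2)).comp (lmap n t)) p := by
    have := (φ.differentiableAt.hasFDerivAt (x := p.1 + t • p.2)).comp p (lmap n t).hasFDerivAt
    exact this
  simpa [Fd] using h1.const_mul (t ^ r)

/-- Basic Schwartz decay along lines, with an integrable bound. -/
lemma decay_bound (φ : SchwartzMap (Fin n → ℝ) ℝ) (K d : ℕ) (c M : ℝ)
    (hc : 0 < c) (hM : 0 ≤ M) :
    ∃ B : ℝ, ∀ (t : ℝ) (y : Fin n → ℝ), c * |t| ≤ ‖y‖ + M →
      (1 + |t|) ^ K * ‖iteratedFDeriv ℝ d (⇑φ) y‖ ≤ B / (1 + t ^ 2) := by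
  set C : ℝ := 2 ^ (K + 2) *
    ((Finset.Iic ((K + 2 : ℕ), d)).sup fun m => SchwartzMap.seminorm ℝ m.1 m.2) φ with hC
  have hφ : ∀ y : Fin n → ℝ, (1 + ‖y‖) ^ (K + 2) * ‖iteratedFDeriv ℝ d (⇑φ) y‖ ≤ C :=
    fun y => SchwartzMap.one_add_le_sup_seminorm_apply (m := ((K + 2 : ℕ), d)) le_rfl le_rfl φ y
  have hC0 : 0 ≤ C := le_trans (by positivity) (hφ 0)
  set c' : ℝ := min 1 c with hc'
  have hc'0 : 0 < c' := lt_min one_pos hc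
  set a : ℝ := (1 + M) / c' with ha
  have ha1 : 0 ≤ a := by positivity
  refine ⟨a ^ (K + 2) * C, fun t y hty => ?_⟩
  have hy0 : (0:ℝ) ≤ ‖y‖ := norm_nonneg _
  have ht0 : (0:ℝ) ≤ |t| := abs_nonneg _
  have key : 1 + |t| ≤ a * (1 + ‖y‖) := by
    rw [ha, div_mul_eq_mul_div, le_div_iff₀ hc'0]
    have h1 : c' * (1 + |t|) ≤ 1 + c * |t| := by
      have := min_le_left 1 c
      have := min_le_right 1 c
      nlinarith
    nlinarith
  have hD0 : (0:ℝ) ≤ ‖iteratedFDeriv ℝ d (⇑φ) y‖ := norm_nonneg _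
  rw [le_div_iff₀ (by positivity)]
  calc (1 + |t|) ^ K * ‖iteratedFDeriv ℝ d (⇑φ) y‖ * (1 + t ^ 2)
      ≤ (1 + |t|) ^ K * ‖iteratedFDeriv ℝ d (⇑φ) y‖ * (1 + |t|) ^ 2 := by
        have : 1 + t ^ 2 ≤ (1 + |t|) ^ 2 := by nlinarith [sq_abs t]
        gcongr
    _ = (1 + |t|) ^ (K + 2) * ‖iteratedFDeriv ℝ d (⇑φ) y‖ := by ring
    _ ≤ (a * (1 + ‖y‖)) ^ (K + 2) * ‖iteratedFDeriv ℝ d (⇑φ) y‖ := by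
        gcongr
    _ = a ^ (K + 2) * ((1 + ‖y‖) ^ (K + 2) * ‖iteratedFDeriv ℝ d (⇑φ) y‖) := by
        rw [mul_pow]; ring
    _ ≤ a ^ (K + 2) * C := by gcongr; exact hφ y

lemma integrable_bound (B : ℝ) : Integrable (fun t : ℝ => B / (1 + t ^ 2)) volume := by
  simpa [div_eq_mul_inv] using integrable_inv_one_add_sq.const_mul B

lemma cont_line (p : (Fin n → ℝ) × (Fin n → ℝ)) :
    Continuous (fun t : ℝ => p.1 + t • p.2) :=
  continuous_const.add (continuous_id.smul continuous_const)

lemma norm_fderiv_eq (φ : SchwartzMap (Fin n → ℝ) ℝ) (y : Fin n → ℝ) :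
    ‖fderiv ℝ (⇑φ) y‖ = ‖iteratedFDeriv ℝ 1 (⇑φ) y‖ := by
  rw [← norm_iteratedFDeriv_fderiv (n := 0), norm_iteratedFDeriv_zero]

lemma integrable_A (φ : SchwartzMap (Fin n → ℝ) ℝ) (r : ℕ)
    (p : (Fin n → ℝ) × (Fin n → ℝ)) (hp : p.2 ≠ 0) :
    Integrable (fun t : ℝ => t ^ r * φ (p.1 + t • p.2)) volume := by
  have hc : 0 < ‖p.2‖ := norm_pos_iff.mpr hp
  obtain ⟨B, hB⟩ := decay_bound φ r 0 ‖p.2‖ ‖p.1‖ hc (norm_nonneg _)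
  refine Integrable.mono' (integrable_bound B) ?_ (Filter.Eventually.of_forall fun t => ?_)
  · exact ((continuous_pow r).mul (φ.continuous.comp (cont_line p))).aestronglyMeasurable
  · have hty : ‖p.2‖ * |t| ≤ ‖p.1 + t • p.2‖ + ‖p.1‖ := by
      have h1 : ‖t • p.2‖ ≤ ‖p.1 + t • p.2‖ + ‖p.1‖ := by
        have := norm_sub_le (p.1 + t • p.2) p.1
        simpa [add_sub_cancel_left] using this
      calc ‖p.2‖ * |t| = ‖t • p.2‖ := by rw [norm_smul, Real.norm_eq_abs]; ring
        _ ≤ _ := h1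
    have hthis := hB t (p.1 + t • p.2) hty
    rw [norm_iteratedFDeriv_zero] at hthis
    refine le_trans ?_ hthis
    rw [Real.norm_eq_abs, abs_mul, abs_pow]
    have h1 : |t| ^ r ≤ (1 + |t|) ^ r :=
      pow_le_pow_left₀ (abs_nonneg t) (by linarith [abs_nonneg t]) r
    exact mul_le_mul_of_nonneg_right h1 (abs_nonneg _)

lemma A_hasFDerivAt (φ : SchwartzMap (Fin n → ℝ) ℝ) (r : ℕ)
    (p₀ : (Fin n → ℝ) × (Fin n → ℝ)) (hp : p₀.2 ≠ 0) :
    Integrable (Fd φ r p₀) volume ∧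
      HasFDerivAt (A φ r) (∫ t : ℝ, Fd φ r p₀ t) p₀ := by
  have hn2 : 0 < ‖p₀.2‖ := norm_pos_iff.mpr hp
  set ε : ℝ := ‖p₀.2‖ / 2 with hε
  have hε0 : 0 < ε := by positivity
  set M : ℝ := ‖p₀.1‖ + ε with hM
  have hM0 : 0 ≤ M := by positivity
  obtain ⟨B, hB⟩ := decay_bound φ (r + 1) 1 ε M hε0 hM0
  have hball : ∀ p ∈ ball p₀ ε, ∀ t : ℝ, ε * |t| ≤ ‖p.1 + t • p.2‖ + M := by
    intro p hpb t
    have hd : ‖p - p₀‖ < ε := by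
      rw [← dist_eq_norm]; exact mem_ball.mp hpb
    have h2 : ε ≤ ‖p.2‖ := by
      have h4 : ‖p₀.2‖ - ‖p.2‖ ≤ ‖p.2 - p₀.2‖ := by
        have := norm_sub_norm_le p₀.2 p.2
        simpa [norm_sub_rev] using this
      have h3 : ‖p.2 - p₀.2‖ ≤ ‖p - p₀‖ := norm_snd_le (p - p₀)
      have h5 : ‖p₀.2‖ - ‖p.2‖ < ε := lt_of_le_of_lt (h4.trans h3) hd
      rw [hε] at *
      linarith
    have h1 : ‖p.1‖ ≤ M := by
      have h3 : ‖p.1 - p₀.1‖ ≤ ‖p - p₀‖ := norm_fst_le (p - p₀)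
      have h6 : ‖p.1‖ - ‖p₀.1‖ ≤ ‖p.1 - p₀.1‖ := norm_sub_norm_le _ _
      rw [hM]
      linarith
    calc ε * |t| ≤ ‖p.2‖ * |t| := by gcongr
      _ = ‖t • p.2‖ := by rw [norm_smul, Real.norm_eq_abs]; ring
      _ ≤ ‖p.1 + t • p.2‖ + ‖p.1‖ := by
          have := norm_sub_le (p.1 + t • p.2) p.1
          simpa [add_sub_cancel_left] using this
      _ ≤ ‖p.1 + t • p.2‖ + M := by linarith
  have hFd_norm : ∀ (t : ℝ), ∀ p ∈ ball p₀ ε, ‖Fd φ r p t‖ ≤ B / (1 + t ^ 2) := by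
    intro t p hpb
    have hty := hball p hpb t
    have hkey := hB t (p.1 + t • p.2) (hty)
    refine le_trans ?_ hkey
    have h1 : ‖Fd φ r p t‖ ≤ |t| ^ r * (‖fderiv ℝ (⇑φ) (p.1 + t • p.2)‖ * (1 + |t|)) := by
      have e : Fd φ r p t = t ^ r • ((fderiv ℝ (⇑φ) (p.1 + t • p.2)).comp (lmap n t)) := rfl
      rw [e]
      refine (norm_smul (t ^ r)
        ((fderiv ℝ (⇑φ) (p.1 + t • p.2)).comp (lmap n t))).le.trans ?_
      rw [Real.norm_eq_abs, abs_pow]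
      refine mul_le_mul_of_nonneg_left ?_ (by positivity)
      calc ‖(fderiv ℝ (⇑φ) (p.1 + t • p.2)).comp (lmap n t)‖
          ≤ ‖fderiv ℝ (⇑φ) (p.1 + t • p.2)‖ * ‖lmap n t‖ :=
            ContinuousLinearMap.opNorm_comp_le _ _
        _ ≤ _ := by gcongr; exact lmap_norm_le t
    refine h1.trans ?_
    rw [norm_fderiv_eq]
    calc |t| ^ r * (‖iteratedFDeriv ℝ 1 (⇑φ) (p.1 + t • p.2)‖ * (1 + |t|))
        ≤ (1 + |t|) ^ r * (‖iteratedFDeriv ℝ 1 (⇑φ) (p.1 + t • p.2)‖ * (1 + |t|)) := by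
          gcongr
          · linarith [abs_nonneg t]
        _ = (1 + |t|) ^ (r + 1) * ‖iteratedFDeriv ℝ 1 (⇑φ) (p.1 + t • p.2)‖ := by ring
  have hFd_cont : Continuous (Fd φ r p₀) := by
    have h1 : Continuous (fderiv ℝ (⇑φ)) :=
      (φ.smooth ⊤).continuous_fderiv (by simp)
    have h2 : Continuous fun t : ℝ => lmap n t := by
      unfold lmap
      exact continuous_const.add (continuous_id.smul continuous_const)
    exact (continuous_pow r).smul
      ((h1.comp (cont_line p₀)).clm_comp h2)
  have hFd_int : Integrable (Fd φ r p₀) volume :=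
    Integrable.mono' (integrable_bound B) hFd_cont.aestronglyMeasurable
      (Filter.Eventually.of_forall fun t => hFd_norm t p₀ (mem_ball_self hε0))
  refine ⟨hFd_int, ?_⟩
  exact hasFDerivAt_integral_of_dominated_of_fderiv_le (μ := volume)
    (F := fun (p : (Fin n → ℝ) × (Fin n → ℝ)) (t : ℝ) => t ^ r * φ (p.1 + t • p.2))
    (F' := fun p t => Fd φ r p t) (bound := fun t => B / (1 + t ^ 2)) (ball_mem_nhds p₀ hε0)
    (Filter.Eventually.of_forall fun p =>
      ((continuous_pow r).mul (φ.continuous.comp (cont_line p))).aestronglyMeasurable)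
    (integrable_A φ r p₀ hp) hFd_cont.aestronglyMeasurable
    (Filter.Eventually.of_forall fun t p hpb => hFd_norm t p hpb)
    (integrable_bound B)
    (Filter.Eventually.of_forall fun t p hpb => Fd_hasFDerivAt φ r t p)

/-- `∂_i` of a Schwartz function, as a Schwartz function. -/
noncomputable def pds (i : Fin n) (φ : SchwartzMap (Fin n → ℝ) ℝ) : SchwartzMap (Fin n → ℝ) ℝ :=
  LineDeriv.lineDerivOp (Pi.single i 1 : Fin n → ℝ) φ

lemma pds_apply (i : Fin n) (φ : SchwartzMap (Fin n → ℝ) ℝ) (y : Fin n → ℝ) :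
    pds i φ y = fderiv ℝ (⇑φ) y (Pi.single i 1) :=
  SchwartzMap.lineDerivOp_apply_eq_fderiv _ φ y

lemma intFd_apply (φ : SchwartzMap (Fin n → ℝ) ℝ) (r : ℕ)
    (p : (Fin n → ℝ) × (Fin n → ℝ)) (hp : p.2 ≠ 0) (v w : Fin n → ℝ) :
    (∫ t : ℝ, Fd φ r p t) (v, w)
      = ∫ t : ℝ, t ^ r * fderiv ℝ (⇑φ) (p.1 + t • p.2) (v + t • w) := by
  rw [ContinuousLinearMap.integral_apply (A_hasFDerivAt φ r p hp).1 (v, w)]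
  refine integral_congr_ae (Filter.Eventually.of_forall fun t => ?_)
  show (t ^ r • ((fderiv ℝ (⇑φ) (p.1 + t • p.2)).comp (lmap n t))) (v, w) = _
  rw [ContinuousLinearMap.smul_apply, ContinuousLinearMap.comp_apply, lmap_apply,
    smul_eq_mul]

lemma intFd_fst (φ : SchwartzMap (Fin n → ℝ) ℝ) (r : ℕ)
    (p : (Fin n → ℝ) × (Fin n → ℝ)) (hp : p.2 ≠ 0) (i : Fin n) :
    (∫ t : ℝ, Fd φ r p t) (Pi.single i 1, (0 : Fin n → ℝ)) = A (pds i φ) r p := by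
  rw [intFd_apply φ r p hp]
  unfold A
  congr 1
  funext t
  rw [pds_apply, smul_zero, add_zero]

lemma intFd_snd (φ : SchwartzMap (Fin n → ℝ) ℝ) (r : ℕ)
    (p : (Fin n → ℝ) × (Fin n → ℝ)) (hp : p.2 ≠ 0) (j : Fin n) :
    (∫ t : ℝ, Fd φ r p t) ((0 : Fin n → ℝ), Pi.single j 1) = A (pds j φ) (r + 1) p := by
  rw [intFd_apply φ r p hp]
  unfold A
  congr 1
  funext t
  rw [pds_apply, zero_add, ContinuousLinearMap.map_smul, smul_eq_mul]
  ring

/-- polynomial factor `Π_a ξ^{I a}` -/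
def Pc (K : ℕ) (I : Fin K → Fin n) (ξ : Fin n → ℝ) : ℝ := ∏ a, ξ (I a)

/-- derivative of `Pc` -/
noncomputable def Pc' (K : ℕ) (I : Fin K → Fin n) (ξ : Fin n → ℝ) : (Fin n → ℝ) →L[ℝ] ℝ :=
  ∑ b : Fin K, (∏ a ∈ Finset.univ.erase b, ξ (I a)) •
    (ContinuousLinearMap.proj (R := ℝ) (φ := fun _ : Fin n => ℝ) (I b))

lemma hasFDerivAt_Pc (K : ℕ) (I : Fin K → Fin n) (ξ : Fin n → ℝ) :
    HasFDerivAt (Pc K I) (Pc' K I ξ) ξ :=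
  HasFDerivAt.finset_prod (u := Finset.univ)
    (g := fun (a : Fin K) (ξ : Fin n → ℝ) => ξ (I a))
    (g' := fun a => ContinuousLinearMap.proj (R := ℝ) (φ := fun _ : Fin n => ℝ) (I a))
    (fun a _ => (ContinuousLinearMap.proj (R := ℝ) (φ := fun _ : Fin n => ℝ) (I a)).hasFDerivAt)

/-- `∂_{ξ^j}` of the polynomial factor -/
def Qc (K : ℕ) (j : Fin n) (I : Fin K → Fin n) (ξ : Fin n → ℝ) : ℝ :=
  ∑ b : Fin K, (∏ a ∈ Finset.univ.erase b, ξ (I a)) * ((Pi.single j 1 : Fin n → ℝ) (I b))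

lemma Pc'_single (K : ℕ) (I : Fin K → Fin n) (ξ : Fin n → ℝ) (j : Fin n) :
    Pc' K I ξ (Pi.single j 1) = Qc K j I ξ := by
  unfold Pc' Qc
  rw [ContinuousLinearMap.sum_apply]
  exact Finset.sum_congr rfl fun b _ => by
    rw [ContinuousLinearMap.smul_apply, ContinuousLinearMap.proj_apply, smul_eq_mul]

lemma differentiable_Qc (K : ℕ) (j : Fin n) (I : Fin K → Fin n) :
    Differentiable ℝ (Qc K j I) := by
  intro ξ
  refine DifferentiableAt.fun_sum (fun b _ => DifferentiableAt.mul_const ?_ _)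
  exact (HasFDerivAt.finset_prod (u := Finset.univ.erase b)
    (g := fun (a : Fin K) (ξ : Fin n → ℝ) => ξ (I a))
    (g' := fun a => ContinuousLinearMap.proj (R := ℝ) (φ := fun _ : Fin n => ℝ) (I a))
    (fun a _ => (ContinuousLinearMap.proj (R := ℝ)
      (φ := fun _ : Fin n => ℝ) (I a)).hasFDerivAt)).differentiableAt

/-- derivative CLM of `q ↦ c q.2 * A φ r q` -/
noncomputable def DcA (c : (Fin n → ℝ) → ℝ) (c' : (Fin n → ℝ) →L[ℝ] ℝ)
    (φ : SchwartzMap (Fin n → ℝ) ℝ) (r : ℕ) (p : (Fin n → ℝ) × (Fin n → ℝ)) :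
    ((Fin n → ℝ) × (Fin n → ℝ)) →L[ℝ] ℝ :=
  c p.2 • (∫ t : ℝ, Fd φ r p t) +
    A φ r p • (c'.comp (ContinuousLinearMap.snd ℝ (Fin n → ℝ) (Fin n → ℝ)))

lemma hasFDerivAt_cA (c : (Fin n → ℝ) → ℝ) (c' : (Fin n → ℝ) →L[ℝ] ℝ)
    (φ : SchwartzMap (Fin n → ℝ) ℝ) (r : ℕ) (p : (Fin n → ℝ) × (Fin n → ℝ))
    (hp : p.2 ≠ 0) (hc : HasFDerivAt c c' p.2) :
    HasFDerivAt (fun q : (Fin n → ℝ) × (Fin n → ℝ) => c q.2 * A φ r q)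
      (DcA c c' φ r p) p := by
  have h1 : HasFDerivAt (fun q : (Fin n → ℝ) × (Fin n → ℝ) => c q.2)
      (c'.comp (ContinuousLinearMap.snd ℝ (Fin n → ℝ) (Fin n → ℝ))) p :=
    hc.comp p hasFDerivAt_snd
  exact h1.mul (A_hasFDerivAt φ r p hp).2

lemma DcA_fst (c : (Fin n → ℝ) → ℝ) (c' : (Fin n → ℝ) →L[ℝ] ℝ)
    (φ : SchwartzMap (Fin n → ℝ) ℝ) (r : ℕ) (p : (Fin n → ℝ) × (Fin n → ℝ))
    (hp : p.2 ≠ 0) (i : Fin n) :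
    DcA c c' φ r p (Pi.single i 1, (0 : Fin n → ℝ)) = c p.2 * A (pds i φ) r p := by
  unfold DcA
  rw [ContinuousLinearMap.add_apply, ContinuousLinearMap.smul_apply,
    ContinuousLinearMap.smul_apply, ContinuousLinearMap.comp_apply]
  rw [show (ContinuousLinearMap.snd ℝ (Fin n → ℝ) (Fin n → ℝ))
      (Pi.single i 1, (0 : Fin n → ℝ)) = (0 : Fin n → ℝ) from rfl]
  rw [map_zero, smul_zero, add_zero, intFd_fst φ r p hp i, smul_eq_mul]

lemma DcA_snd (c : (Fin n → ℝ) → ℝ) (c' : (Fin n → ℝ) →L[ℝ] ℝ)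
    (φ : SchwartzMap (Fin n → ℝ) ℝ) (r : ℕ) (p : (Fin n → ℝ) × (Fin n → ℝ))
    (hp : p.2 ≠ 0) (j : Fin n) :
    DcA c c' φ r p ((0 : Fin n → ℝ), Pi.single j 1)
      = c p.2 * A (pds j φ) (r + 1) p + A φ r p * c' (Pi.single j 1) := by
  unfold DcA
  rw [ContinuousLinearMap.add_apply, ContinuousLinearMap.smul_apply,
    ContinuousLinearMap.smul_apply, ContinuousLinearMap.comp_apply]
  rw [show (ContinuousLinearMap.snd ℝ (Fin n → ℝ) (Fin n → ℝ))
      ((0 : Fin n → ℝ), Pi.single j 1) = (Pi.single j 1 : Fin n → ℝ) from rfl]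
  rw [intFd_snd φ r p hp j, smul_eq_mul, smul_eq_mul]

/-- `Gsum K g r p = Σ_I Pc(I, ξ) A(g I, r, p)`. -/
noncomputable def Gsum (K : ℕ) (g : (Fin K → Fin n) → SchwartzMap (Fin n → ℝ) ℝ) (r : ℕ)
    (p : (Fin n → ℝ) × (Fin n → ℝ)) : ℝ :=
  ∑ I : Fin K → Fin n, Pc K I p.2 * A (g I) r p

lemma hasFDerivAt_Gsum (K : ℕ) (g : (Fin K → Fin n) → SchwartzMap (Fin n → ℝ) ℝ) (r : ℕ)
    (p : (Fin n → ℝ) × (Fin n → ℝ)) (hp : p.2 ≠ 0) :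
    HasFDerivAt (Gsum K g r)
      (∑ I : Fin K → Fin n, DcA (Pc K I) (Pc' K I p.2) (g I) r p) p :=
  HasFDerivAt.fun_sum (fun I _ =>
    hasFDerivAt_cA (Pc K I) (Pc' K I p.2) (g I) r p hp (hasFDerivAt_Pc K I p.2))

lemma pdxi_Gsum (K : ℕ) (g : (Fin K → Fin n) → SchwartzMap (Fin n → ℝ) ℝ) (r : ℕ)
    (p : (Fin n → ℝ) × (Fin n → ℝ)) (hp : p.2 ≠ 0) (j : Fin n) :
    pdxi n j (Gsum K g r) p
      = ∑ I : Fin K → Fin n,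
          (Pc K I p.2 * A (pds j (g I)) (r + 1) p + Qc K j I p.2 * A (g I) r p) := by
  unfold pdxi
  rw [(hasFDerivAt_Gsum K g r p hp).fderiv, ContinuousLinearMap.sum_apply]
  refine Finset.sum_congr rfl fun I _ => ?_
  rw [DcA_snd (Pc K I) (Pc' K I p.2) (g I) r p hp j, Pc'_single]
  ring

/-- the explicit formula for `∂_{ξ^j} Gsum`. -/
noncomputable def Ej (K : ℕ) (g : (Fin K → Fin n) → SchwartzMap (Fin n → ℝ) ℝ) (r : ℕ)
    (j : Fin n) (q : (Fin n → ℝ) × (Fin n → ℝ)) : ℝ :=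
  ∑ I : Fin K → Fin n,
    (Pc K I q.2 * A (pds j (g I)) (r + 1) q + Qc K j I q.2 * A (g I) r q)

lemma pdx_Ej (K : ℕ) (g : (Fin K → Fin n) → SchwartzMap (Fin n → ℝ) ℝ) (r : ℕ)
    (j : Fin n) (p : (Fin n → ℝ) × (Fin n → ℝ)) (hp : p.2 ≠ 0) (i : Fin n) :
    pdx n i (Ej K g r j) p
      = ∑ I : Fin K → Fin n,
          (Pc K I p.2 * A (pds i (pds j (g I))) (r + 1) p
            + Qc K j I p.2 * A (pds i (g I)) r p) := by
  unfold pdx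
  have hE : HasFDerivAt (Ej K g r j)
      (∑ I : Fin K → Fin n,
        (DcA (Pc K I) (Pc' K I p.2) (pds j (g I)) (r + 1) p
          + DcA (Qc K j I) (fderiv ℝ (Qc K j I) p.2) (g I) r p)) p := by
    refine HasFDerivAt.fun_sum (fun I _ => HasFDerivAt.add ?_ ?_)
    · exact hasFDerivAt_cA (Pc K I) (Pc' K I p.2) (pds j (g I)) (r + 1) p hp
        (hasFDerivAt_Pc K I p.2)
    · exact hasFDerivAt_cA (Qc K j I) (fderiv ℝ (Qc K j I) p.2) (g I) r p hp
        ((differentiable_Qc K j I p.2).hasFDerivAt)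
  rw [hE.fderiv, ContinuousLinearMap.sum_apply]
  refine Finset.sum_congr rfl fun I _ => ?_
  rw [ContinuousLinearMap.add_apply,
    DcA_fst (Pc K I) (Pc' K I p.2) (pds j (g I)) (r + 1) p hp i,
    DcA_fst (Qc K j I) (fderiv ℝ (Qc K j I) p.2) (g I) r p hp i]

section Comb
variable {k : ℕ}

lemma prod_erase_eq (b : Fin (k + 1)) (h : Fin (k + 1) → ℝ) :
    ∏ a ∈ Finset.univ.erase b, h a = ∏ a : Fin k, h (b.succAbove a) := by
  have he : Finset.univ.erase b = Finset.map (Fin.succAboveEmb b) Finset.univ := by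
    ext a
    simp only [Finset.mem_erase, Finset.mem_univ, and_true, Finset.mem_map, true_and]
    constructor
    · intro h
      obtain ⟨z, hz⟩ := Fin.exists_succAbove_eq h
      exact ⟨z, by simpa using hz⟩
    · rintro ⟨z, rfl⟩
      simpa using Fin.succAbove_ne b z
  rw [he, Finset.prod_map]
  rfl

lemma insertNth_eq_snoc_comp (b : Fin (k + 1)) (j : Fin n) (I' : Fin k → Fin n) :
    b.insertNth j I' = (Fin.snoc I' j : Fin (k + 1) → Fin n) ∘
      ((finSuccEquiv' b).trans (finSuccEquiv' (Fin.last k)).symm) := by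
  funext a
  refine Fin.succAboveCases b ?_ ?_ a
  · simp [Fin.insertNth_apply_same, finSuccEquiv'_at, Fin.snoc_last]
  · intro c
    simp [Fin.insertNth_apply_succAbove, finSuccEquiv'_succAbove,
      finSuccEquiv'_symm_some, Fin.succAbove_last, Fin.snoc_castSucc]

/-- key combinatorial identity -/
lemma comb_identity (c : (Fin (k + 1) → Fin n) → ℝ)
    (hsc : ∀ (I : Fin (k + 1) → Fin n) (π : Equiv.Perm (Fin (k + 1))), c (I ∘ π) = c I)
    (j : Fin n) (ξ : Fin n → ℝ) :
    ∑ I : Fin (k + 1) → Fin n,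
        (∑ b : Fin (k + 1), (∏ a ∈ Finset.univ.erase b, ξ (I a)) * ((Pi.single j 1 : Fin n → ℝ) (I b)))
          * c I
      = ((k : ℝ) + 1) * ∑ I' : Fin k → Fin n, (∏ a : Fin k, ξ (I' a)) * c (Fin.snoc I' j) := by
  have step1 : ∀ b : Fin (k + 1),
      (∑ I : Fin (k + 1) → Fin n,
        (∏ a ∈ Finset.univ.erase b, ξ (I a)) * ((Pi.single j 1 : Fin n → ℝ) (I b)) * c I)
      = ∑ I' : Fin k → Fin n, (∏ a : Fin k, ξ (I' a)) * c (Fin.snoc I' j) := by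
    intro b
    rw [← (Fin.insertNthEquiv (fun _ => Fin n) b).sum_comp
      (fun I => (∏ a ∈ Finset.univ.erase b, ξ (I a)) * ((Pi.single j 1 : Fin n → ℝ) (I b)) * c I)]
    rw [Fintype.sum_prod_type]
    have hcol : ∀ y : Fin n, ∀ I' : Fin k → Fin n,
        (∏ a ∈ Finset.univ.erase b, ξ ((Fin.insertNthEquiv (fun _ => Fin n) b) (y, I') a)) *
            ((Pi.single j 1 : Fin n → ℝ) ((Fin.insertNthEquiv (fun _ => Fin n) b) (y, I') b)) *
            c ((Fin.insertNthEquiv (fun _ => Fin n) b) (y, I'))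
          = if y = j then (∏ a : Fin k, ξ (I' a)) * c (Fin.snoc I' j) else 0 := by
      intro y I'
      have happ : (Fin.insertNthEquiv (fun _ => Fin n) b) (y, I') = (b.insertNth y I' : Fin (k + 1) → Fin n) := rfl
      rw [happ, Fin.insertNth_apply_same, Pi.single_apply]
      by_cases hy : y = j
      · subst hy
        rw [if_pos rfl, if_pos rfl, mul_one]
        have h1 : ∏ a ∈ Finset.univ.erase b, ξ ((b.insertNth y I' : Fin (k + 1) → Fin n) a)
            = ∏ a : Fin k, ξ (I' a) := by
          rw [prod_erase_eq b (fun a => ξ ((b.insertNth y I' : Fin (k + 1) → Fin n) a))]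
          exact Finset.prod_congr rfl fun a _ => by rw [Fin.insertNth_apply_succAbove]
        have h2 : c (b.insertNth y I' : Fin (k + 1) → Fin n) = c (Fin.snoc I' y) := by
          rw [insertNth_eq_snoc_comp]
          exact hsc _ _
        rw [h1, h2]
      · rw [if_neg hy, if_neg hy, mul_zero, zero_mul]
    calc ∑ y : Fin n, ∑ I' : Fin k → Fin n, _ = _ := by
          refine Finset.sum_congr rfl fun y _ => Finset.sum_congr rfl fun I' _ => hcol y I'
      _ = _ := by
          rw [Finset.sum_comm]
          simp only [Finset.sum_ite_eq' Finset.univ j, Finset.mem_univ, if_true]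
  calc ∑ I : Fin (k + 1) → Fin n,
        (∑ b : Fin (k + 1), (∏ a ∈ Finset.univ.erase b, ξ (I a)) * ((Pi.single j 1 : Fin n → ℝ) (I b)))
          * c I
      = ∑ b : Fin (k + 1), ∑ I : Fin (k + 1) → Fin n,
          (∏ a ∈ Finset.univ.erase b, ξ (I a)) * ((Pi.single j 1 : Fin n → ℝ) (I b)) * c I := by
        rw [Finset.sum_comm]
        exact Finset.sum_congr rfl fun I _ => by rw [Finset.sum_mul]
    _ = ∑ b : Fin (k + 1), ∑ I' : Fin k → Fin n, (∏ a : Fin k, ξ (I' a)) * c (Fin.snoc I' j) := by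
        exact Finset.sum_congr rfl fun b _ => step1 b
    _ = ((k : ℝ) + 1) * ∑ I' : Fin k → Fin n, (∏ a : Fin k, ξ (I' a)) * c (Fin.snoc I' j) := by
        rw [Finset.sum_const, Finset.card_univ, Fintype.card_fin, nsmul_eq_mul]
        push_cast
        ring

lemma sum_Qc_mul (k : ℕ) (c : (Fin (k + 1) → Fin n) → ℝ)
    (hsc : ∀ (I : Fin (k + 1) → Fin n) (π : Equiv.Perm (Fin (k + 1))), c (I ∘ π) = c I)
    (j : Fin n) (ξ : Fin n → ℝ) :
    ∑ I : Fin (k + 1) → Fin n, Qc (k + 1) j I ξ * c I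
      = ((k : ℝ) + 1) * ∑ I' : Fin k → Fin n, Pc k I' ξ * c (Fin.snoc I' j) := by
  unfold Qc Pc
  exact comb_identity c hsc j ξ

end Comb

lemma pds_comm (i j : Fin n) (φ : SchwartzMap (Fin n → ℝ) ℝ) :
    pds i (pds j φ) = pds j (pds i φ) := by
  ext y
  have hφ1 : ∀ z, HasFDerivAt (⇑φ) (fderiv ℝ (⇑φ) z) z := fun z =>
    φ.differentiableAt.hasFDerivAt
  have h2 : DifferentiableAt ℝ (fderiv ℝ (⇑φ)) y :=
    (((φ.smooth ⊤).fderiv_right (m := 1) (ENat.natCast_le_of_coe_top_le_withTop le_rfl _)).differentiable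
      one_ne_zero) y
  have hsym := second_derivative_symmetric hφ1 h2.hasFDerivAt
    (Pi.single i 1) (Pi.single j 1)
  have main : ∀ i' j' : Fin n, pds i' (pds j' φ) y
      = fderiv ℝ (fderiv ℝ (⇑φ)) y (Pi.single i' 1) (Pi.single j' 1) := by
    intro i' j'
    have hco : ⇑(pds j' φ) = fun z => fderiv ℝ (⇑φ) z (Pi.single j' 1) :=
      funext (pds_apply j' φ)
    have hkey : HasFDerivAt (fun z => fderiv ℝ (⇑φ) z (Pi.single j' 1))
        ((ContinuousLinearMap.apply ℝ ℝ (Pi.single j' 1)).comp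
          (fderiv ℝ (fderiv ℝ (⇑φ)) y)) y :=
      (ContinuousLinearMap.apply ℝ ℝ (Pi.single j' 1 : Fin n → ℝ)).hasFDerivAt.comp y
        h2.hasFDerivAt
    rw [pds_apply, hco, hkey.fderiv]
    rfl
  rw [main i j, main j i, hsym]

lemma JmomT_eq_Gsum (K r : ℕ) (g : (Fin K → Fin n) → SchwartzMap (Fin n → ℝ) ℝ)
    (q : (Fin n → ℝ) × (Fin n → ℝ)) (hq : q.2 ≠ 0) :
    JmomT n r K (fun I => ⇑(g I)) q = Gsum K g r q := by
  unfold JmomT Gsum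
  calc ∫ t : ℝ, t ^ r * ∑ I : Fin K → Fin n, g I (q.1 + t • q.2) * ∏ a, q.2 (I a)
      = ∫ t : ℝ, ∑ I : Fin K → Fin n, (t ^ r * g I (q.1 + t • q.2)) * ∏ a, q.2 (I a) := by
        refine integral_congr_ae (Filter.Eventually.of_forall fun t => ?_)
        show t ^ r * ∑ I : Fin K → Fin n, g I (q.1 + t • q.2) * ∏ a, q.2 (I a)
            = ∑ I : Fin K → Fin n, t ^ r * g I (q.1 + t • q.2) * ∏ a, q.2 (I a)
        rw [Finset.mul_sum]
        exact Finset.sum_congr rfl fun I _ => by ring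
    _ = ∑ I : Fin K → Fin n, ∫ t : ℝ, (t ^ r * g I (q.1 + t • q.2)) * ∏ a, q.2 (I a) :=
        integral_finset_sum _ (fun I _ => (integrable_A (g I) r q hq).mul_const _)
    _ = ∑ I : Fin K → Fin n, Pc K I q.2 * A (g I) r q := by
        refine Finset.sum_congr rfl fun I _ => ?_
        rw [integral_mul_const, mul_comm]
        rfl

lemma A_smul_sub (c : ℝ) (u v : SchwartzMap (Fin n → ℝ) ℝ) (r : ℕ)
    (p : (Fin n → ℝ) × (Fin n → ℝ)) (hp : p.2 ≠ 0) :
    A (c • (u - v)) r p = c * (A u r p - A v r p) := by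
  unfold A
  have h1 : ∀ t : ℝ, t ^ r * (c • (u - v)) (p.1 + t • p.2)
      = c * (t ^ r * u (p.1 + t • p.2)) - c * (t ^ r * v (p.1 + t • p.2)) := by
    intro t
    have : (c • (u - v)) (p.1 + t • p.2) = c * (u (p.1 + t • p.2) - v (p.1 + t • p.2)) := by
      simp [SchwartzMap.smul_apply, SchwartzMap.sub_apply, smul_eq_mul]
    rw [this]; ring
  rw [integral_congr_ae (Filter.Eventually.of_forall h1),
    integral_sub ((integrable_A u r p hp).const_mul c) ((integrable_A v r p hp).const_mul c),
    integral_const_mul, integral_const_mul]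
  ring

lemma main_formula (m k : ℕ) (f : (Fin (k + 1) → Fin n) → SchwartzMap (Fin n → ℝ) ℝ)
    (hsym : ∀ (I : Fin (k + 1) → Fin n) (π : Equiv.Perm (Fin (k + 1))), f (I ∘ π) = f I)
    (i j : Fin n) (p : (Fin n → ℝ) × (Fin n → ℝ)) (hp : p.2 ≠ 0) :
    john n i j (JmomT n m (k + 1) (fun a => ⇑(f a))) p
      = JmomT n m k (fun I y =>
          ((k : ℝ) + 1) *
            (fderiv ℝ (f (Fin.snoc I j)) y (Pi.single i 1)
              - fderiv ℝ (f (Fin.snoc I i)) y (Pi.single j 1))) p := by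
  have hU : IsOpen {q : (Fin n → ℝ) × (Fin n → ℝ) | q.2 ≠ 0} :=
    isOpen_compl_singleton.preimage continuous_snd
  have hpU : p ∈ {q : (Fin n → ℝ) × (Fin n → ℝ) | q.2 ≠ 0} := hp
  -- ∂_{ξ^{j'}} of the transform on U
  have hpdxi : ∀ (j' : Fin n), ∀ q : (Fin n → ℝ) × (Fin n → ℝ), q.2 ≠ 0 →
      pdxi n j' (JmomT n m (k + 1) (fun a => ⇑(f a))) q = Ej (k + 1) f m j' q := by
    intro j' q hq
    have hev : (JmomT n m (k + 1) (fun a => ⇑(f a))) =ᶠ[nhds q] Gsum (k + 1) f m := by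
      filter_upwards [hU.mem_nhds hq] with q' hq'
      exact JmomT_eq_Gsum (k + 1) m f q' hq'
    unfold pdxi
    rw [hev.fderiv_eq]
    exact pdxi_Gsum (k + 1) f m q hq j'
  -- mixed second derivatives
  have hE : ∀ (i' j' : Fin n),
      pdx n i' (pdxi n j' (JmomT n m (k + 1) (fun a => ⇑(f a)))) p
        = ∑ I : Fin (k + 1) → Fin n,
            (Pc (k + 1) I p.2 * A (pds i' (pds j' (f I))) (m + 1) p
              + Qc (k + 1) j' I p.2 * A (pds i' (f I)) m p) := by
    intro i' j'
    have hev2 : (pdxi n j' (JmomT n m (k + 1) (fun a => ⇑(f a))))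
        =ᶠ[nhds p] Ej (k + 1) f m j' := by
      filter_upwards [hU.mem_nhds hpU] with q hq
      exact hpdxi j' q hq
    unfold pdx
    rw [hev2.fderiv_eq]
    exact pdx_Ej (k + 1) f m j' p hp i'
  -- the John operator applied to the transform
  have hjohn : john n i j (JmomT n m (k + 1) (fun a => ⇑(f a))) p
      = (∑ I : Fin (k + 1) → Fin n, Qc (k + 1) j I p.2 * A (pds i (f I)) m p)
        - ∑ I : Fin (k + 1) → Fin n, Qc (k + 1) i I p.2 * A (pds j (f I)) m p := by
    unfold john
    rw [hE i j, hE j i, ← Finset.sum_sub_distrib]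
    rw [show (∑ I : Fin (k + 1) → Fin n,
        ((Pc (k + 1) I p.2 * A (pds i (pds j (f I))) (m + 1) p
            + Qc (k + 1) j I p.2 * A (pds i (f I)) m p)
          - (Pc (k + 1) I p.2 * A (pds j (pds i (f I))) (m + 1) p
            + Qc (k + 1) i I p.2 * A (pds j (f I)) m p)))
        = ∑ I : Fin (k + 1) → Fin n,
            (Qc (k + 1) j I p.2 * A (pds i (f I)) m p
              - Qc (k + 1) i I p.2 * A (pds j (f I)) m p) from
      Finset.sum_congr rfl fun I _ => by rw [pds_comm i j (f I)]; ring]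
    rw [Finset.sum_sub_distrib]
  -- the right-hand side
  set S : (Fin k → Fin n) → SchwartzMap (Fin n → ℝ) ℝ := fun I =>
    ((k : ℝ) + 1) • (pds i (f (Fin.snoc I j)) - pds j (f (Fin.snoc I i))) with hS
  have hRHS1 : (fun (I : Fin k → Fin n) (y : Fin n → ℝ) =>
      ((k : ℝ) + 1) *
        (fderiv ℝ (f (Fin.snoc I j)) y (Pi.single i 1)
          - fderiv ℝ (f (Fin.snoc I i)) y (Pi.single j 1)))
      = fun I => ⇑(S I) := by
    funext I y
    rw [hS]
    simp only [SchwartzMap.smul_apply, SchwartzMap.sub_apply, smul_eq_mul]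
    rw [pds_apply, pds_apply]
  rw [hRHS1, JmomT_eq_Gsum k m S p hp, hjohn]
  have comb1 := sum_Qc_mul k (fun I => A (pds i (f I)) m p)
    (fun I π => by simp only [hsym I π]) j p.2
  have comb2 := sum_Qc_mul k (fun I => A (pds j (f I)) m p)
    (fun I π => by simp only [hsym I π]) i p.2
  rw [comb1, comb2]
  unfold Gsum
  rw [show (∑ I' : Fin k → Fin n, Pc k I' p.2 * A (S I') m p)
      = ∑ I' : Fin k → Fin n,
          (((k : ℝ) + 1) * (Pc k I' p.2 * A (pds i (f (Fin.snoc I' j))) m p)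
            - ((k : ℝ) + 1) * (Pc k I' p.2 * A (pds j (f (Fin.snoc I' i))) m p)) from
    Finset.sum_congr rfl fun I' _ => by
      rw [hS, A_smul_sub ((k : ℝ) + 1) _ _ m p hp]; ring]
  rw [Finset.sum_sub_distrib, ← Finset.mul_sum, ← Finset.mul_sum]

end Stmt7Aux

/-- Formula (2.9): for a rank `k+1` symmetric Schwartz tensor field `f`,
`J_{ij}(J^{m,k+1} f) = J^{m,k} h_{ij}`, where
`(h_{ij})_{i₁…i_k} = (k+1)(∂f_{i₁…i_k j}/∂x^i − ∂f_{i₁…i_k i}/∂x^j)`. -/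
theorem stmt7 (n m k : ℕ) (f : (Fin (k + 1) → Fin n) → SchwartzMap (Fin n → ℝ) ℝ)
    (hsym : ∀ (I : Fin (k + 1) → Fin n) (π : Equiv.Perm (Fin (k + 1))), f (I ∘ π) = f I)
    (i j : Fin n) :
    ∀ x ξ : Fin n → ℝ, ξ ≠ 0 →
      john n i j (JmomT n m (k + 1) (fun a => ⇑(f a))) (x, ξ)
        = JmomT n m k (fun I y =>
            ((k : ℝ) + 1) *
              (fderiv ℝ (f (Fin.snoc I j)) y (Pi.single i 1)
                - fderiv ℝ (f (Fin.snoc I i)) y (Pi.single j 1))) (x, ξ) := by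
  intro x ξ hξ
  exact Stmt7Aux.main_formula m k f hsym i j (x, ξ) hξ
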